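/- Let 0 < u < v with v ≥ 2u and 1/2 < H_u, H_v < 1. Then ∫_0^u (u−s)^{H_u−3/2}(v−s)^{H_v−3/2} ds = (u^{H_u−1/2}(v−u)^{H_v−3/2}/(H_u−1/2)) · ₂F₁(3/2−H_v, H_u−1/2; H_u+1/2; −u/(v−u)), where ₂F₁ is the Gaussian hypergeometric function. -/

import Mathlib

open MeasureTheory Real Set

/-- The Gaussian hypergeometric function `₂F₁(a,b;c;z)`, given (for the relevant
parameter range) by its Euler integral representation
`(Γ(c)/(Γ(b)Γ(c-b))) ∫_0^1 t^(b-1)(1-t)^(c-b-1)(1-zt)^(-a) dt`. -/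
noncomputable def gaussHyper (a b c z : ℝ) : ℝ :=
  (Real.Gamma c / (Real.Gamma b * Real.Gamma (c - b))) *
    ∫ t in Set.Ioo (0:ℝ) 1, t ^ (b - 1) * (1 - t) ^ (c - b - 1) * (1 - z * t) ^ (-a)

/-- Closed-form hypergeometric representation of the singular covariance
integral: for `0 < u < v`, `v ≥ 2u` and `1/2 < H_u, H_v < 1`,
`∫_0^u (u-s)^(H_u-3/2)(v-s)^(H_v-3/2) ds
  = (u^(H_u-1/2)(v-u)^(H_v-3/2)/(H_u-1/2)) ₂F₁(3/2-H_v, H_u-1/2; H_u+1/2; -u/(v-u))`. -/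
theorem stmt12 (u v Hu Hv : ℝ) (hu : 0 < u) (huv : u < v) (hv2u : 2 * u ≤ v)
    (hHu : Hu ∈ Set.Ioo (1/2 : ℝ) 1) (hHv : Hv ∈ Set.Ioo (1/2 : ℝ) 1) :
    (∫ s in Set.Ioo (0:ℝ) u, (u - s) ^ (Hu - 3/2) * (v - s) ^ (Hv - 3/2)) =
      (u ^ (Hu - 1/2) * (v - u) ^ (Hv - 3/2) / (Hu - 1/2)) *
        gaussHyper (3/2 - Hv) (Hu - 1/2) (Hu + 1/2) (-(u / (v - u))) := by
  obtain ⟨hHu1, hHu2⟩ := hHu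
  obtain ⟨hHv1, hHv2⟩ := hHv
  have hvu : (0:ℝ) < v - u := by linarith
  have hb0 : (0:ℝ) < Hu - 1/2 := by linarith
  -- image of (0,1) under t ↦ u - u*t
  have himg : (fun t : ℝ => u - u * t) '' Ioo (0:ℝ) 1 = Ioo 0 u := by
    ext x
    constructor
    · rintro ⟨t, ⟨ht0, ht1⟩, rfl⟩
      simp only
      constructor <;> nlinarith
    · rintro ⟨hx0, hxu⟩
      refine ⟨(u - x) / u, ⟨div_pos (by linarith) hu, (div_lt_one hu).2 (by linarith)⟩, ?_⟩
      field_simp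
      ring
  have hd : ∀ x : ℝ, HasDerivAt (fun t : ℝ => u - u * t) (-u) x := fun x => by
    simpa using ((hasDerivAt_id x).const_mul u).const_sub u
  have hinj : InjOn (fun t : ℝ => u - u * t) (Ioo (0:ℝ) 1) := by
    intro a _ c _ h
    simp only at h
    have : u * a = u * c := by linarith
    exact mul_left_cancel₀ hu.ne' this
  have key : (∫ s in Ioo (0:ℝ) u, (u - s) ^ (Hu - 3/2) * (v - s) ^ (Hv - 3/2))
      = ∫ t in Ioo (0:ℝ) 1,
          |(-u)| • ((u - (u - u * t)) ^ (Hu - 3/2) * (v - (u - u * t)) ^ (Hv - 3/2)) := by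
    rw [← himg]
    exact integral_image_eq_integral_abs_deriv_smul measurableSet_Ioo
      (fun x _ => (hd x).hasDerivWithinAt) hinj _
  have hpt : ∀ t ∈ Ioo (0:ℝ) 1,
      |(-u)| • ((u - (u - u * t)) ^ (Hu - 3/2) * (v - (u - u * t)) ^ (Hv - 3/2))
      = (u ^ (Hu - 1/2) * (v - u) ^ (Hv - 3/2)) *
          (t ^ (Hu - 3/2) * (1 + (u / (v - u)) * t) ^ (Hv - 3/2)) := by
    rintro t ⟨ht0, ht1⟩
    have h1 : u - (u - u * t) = u * t := by ring
    have h2 : v - (u - u * t) = (v - u) * (1 + (u / (v - u)) * t) := by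
      field_simp
      ring
    have h4 : (0:ℝ) ≤ 1 + u / (v - u) * t := by
      have := div_nonneg hu.le hvu.le
      nlinarith
    rw [h1, h2, abs_neg, abs_of_pos hu, smul_eq_mul,
        Real.mul_rpow hu.le ht0.le, Real.mul_rpow hvu.le h4]
    have h3 : u * u ^ (Hu - 3/2) = u ^ (Hu - 1/2) := by
      nth_rewrite 1 [← Real.rpow_one u]
      rw [← Real.rpow_add hu]
      congr 1
      ring
    rw [← h3]
    ring
  have hGamma : gaussHyper (3/2 - Hv) (Hu - 1/2) (Hu + 1/2) (-(u / (v - u)))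
      = (Hu - 1/2) * ∫ t in Ioo (0:ℝ) 1,
          t ^ (Hu - 3/2) * (1 + (u / (v - u)) * t) ^ (Hv - 3/2) := by
    unfold gaussHyper
    have e1 : Hu + 1/2 - (Hu - 1/2) = 1 := by ring
    have e2 : Hu + 1/2 = (Hu - 1/2) + 1 := by ring
    have hG : Real.Gamma (Hu - 1/2) ≠ 0 := (Real.Gamma_pos_of_pos hb0).ne'
    rw [e1, e2, Real.Gamma_add_one hb0.ne', Real.Gamma_one, mul_one, mul_div_assoc,
        div_self hG, mul_one]
    congr 1
    apply setIntegral_congr_fun measurableSet_Ioo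
    rintro t ⟨ht0, ht1⟩
    have e4 : 1 - -(u / (v - u)) * t = 1 + (u / (v - u)) * t := by ring
    simp only [show Hu - 1/2 - 1 = Hu - 3/2 from by ring,
      show -(3/2 - Hv) = Hv - 3/2 from by ring, e4]
    norm_num
  rw [key, setIntegral_congr_fun measurableSet_Ioo hpt, integral_const_mul, hGamma,
      div_mul_eq_mul_div, mul_comm (Hu - 1/2 : ℝ), ← mul_assoc, mul_div_assoc,
      div_self hb0.ne', mul_one]
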